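/- The limit as n → ∞ of the ratio (C_{n-3}⁴·(n-5)²) / (C_n⁴·(n+1)²) equals 1/2²⁴ (and in particular is positive). Here the numerator counts the pairs (u,v) of cyclically marked tree pair diagrams of size n of the special ping-pong form generating a free subgroup of rank 2 in Thompson's group T, and the denominator counts all pairs of cyclically marked tree pair diagrams of size n. -/

import Mathlib

open Filter

private lemma catalan_pos (n : ℕ) : 0 < catalan n := by
  rcases Nat.eq_zero_or_pos (catalan n) with h | h
  · have := succ_mul_catalan_eq_centralBinom n
    rw [h, mul_zero] at this
    exact absurd this.symm (Nat.centralBinom_pos n).ne'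
  · exact h

private lemma catalan_ratio_eq (n : ℕ) :
    (catalan (n + 1) : ℝ) / catalan n = 4 - 6 / ((n : ℝ) + 2) := by
  have hnat : (n + 1) * ((n + 1 + 1) * catalan (n + 1))
      = 2 * (2 * n + 1) * ((n + 1) * catalan n) := by
    rw [succ_mul_catalan_eq_centralBinom, succ_mul_catalan_eq_centralBinom]
    exact Nat.succ_mul_centralBinom_succ n
  have h1 : ((n : ℝ) + 1) * (((n : ℝ) + 1 + 1) * catalan (n + 1))
      = 2 * (2 * (n : ℝ) + 1) * (((n : ℝ) + 1) * catalan n) := by exact_mod_cast hnat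
  have hc : (catalan n : ℝ) ≠ 0 := by exact_mod_cast (catalan_pos n).ne'
  have hn1 : ((n : ℝ) + 1) ≠ 0 := by positivity
  have hn2 : ((n : ℝ) + 2) ≠ 0 := by positivity
  field_simp
  nlinarith [h1]

private lemma catalan_ratio_tendsto :
    Tendsto (fun n : ℕ => (catalan (n + 1) : ℝ) / catalan n) atTop (nhds 4) := by
  have h : Tendsto (fun n : ℕ => (4 : ℝ) - 6 / ((n : ℝ) + 2)) atTop (nhds (4 - 0)) := by
    apply Tendsto.sub tendsto_const_nhds
    apply Tendsto.div_atTop tendsto_const_nhds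
    exact tendsto_atTop_add_const_right _ 2 tendsto_natCast_atTop_atTop
  simpa using h.congr fun n => (catalan_ratio_eq n).symm

private lemma catalan_shift3 :
    Tendsto (fun n : ℕ => (catalan (n - 3) : ℝ) / catalan n) atTop (nhds 64⁻¹) := by
  have q := catalan_ratio_tendsto
  have h3 : Tendsto (fun n : ℕ => (catalan (n - 3 + 1) : ℝ) / catalan (n - 3)) atTop (nhds 4) :=
    q.comp (tendsto_sub_atTop_nat 3)
  have h2 : Tendsto (fun n : ℕ => (catalan (n - 2 + 1) : ℝ) / catalan (n - 2)) atTop (nhds 4) :=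
    q.comp (tendsto_sub_atTop_nat 2)
  have h1 : Tendsto (fun n : ℕ => (catalan (n - 1 + 1) : ℝ) / catalan (n - 1)) atTop (nhds 4) :=
    q.comp (tendsto_sub_atTop_nat 1)
  have hprod := ((h3.mul h2).mul h1).inv₀ (by norm_num)
  have : ((4:ℝ) * 4 * 4)⁻¹ = 64⁻¹ := by norm_num
  rw [this] at hprod
  apply hprod.congr'
  filter_upwards [eventually_ge_atTop 3] with n hn
  have e1 : n - 3 + 1 = n - 2 := by omega
  have e2 : n - 2 + 1 = n - 1 := by omega
  have e3 : n - 1 + 1 = n := by omega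
  rw [e1, e2, e3]
  have c1 : (catalan (n - 2) : ℝ) ≠ 0 := by exact_mod_cast (catalan_pos _).ne'
  have c2 : (catalan (n - 1) : ℝ) ≠ 0 := by exact_mod_cast (catalan_pos _).ne'
  have c3 : (catalan n : ℝ) ≠ 0 := by exact_mod_cast (catalan_pos _).ne'
  field_simp

private lemma frac_tendsto :
    Tendsto (fun n : ℕ => ((n - 5 : ℕ) : ℝ) / ((n : ℝ) + 1)) atTop (nhds 1) := by
  have h : Tendsto (fun n : ℕ => 1 - 6 / ((n : ℝ) + 1)) atTop (nhds (1 - 0)) := by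
    apply Tendsto.sub tendsto_const_nhds
    apply Tendsto.div_atTop tendsto_const_nhds
    exact tendsto_atTop_add_const_right _ 1 tendsto_natCast_atTop_atTop
  rw [sub_zero] at h
  apply h.congr'
  filter_upwards [eventually_ge_atTop 5] with n hn
  have : ((n - 5 : ℕ) : ℝ) = (n : ℝ) - 5 := by
    have : (n : ℝ) ≥ 5 := by exact_mod_cast hn
    push_cast [Nat.cast_sub hn]; ring
  rw [this]
  have hn1 : ((n : ℝ) + 1) ≠ 0 := by positivity
  field_simp
  ring

/-- The fraction of ping-pong pairs generating a free subgroup of rank 2 in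
Thompson's group `T`, namely `C_{n-3}⁴·(n-5)²` out of all `C_n⁴·(n+1)²` pairs of
cyclically marked tree pair diagrams of size `n`, tends to `1/2²⁴`. -/
theorem density_free_T :
    Filter.Tendsto
      (fun n : ℕ => ((catalan (n - 3) ^ 4 * (n - 5) ^ 2 : ℕ) : ℝ) /
        ((catalan n ^ 4 * (n + 1) ^ 2 : ℕ) : ℝ))
      Filter.atTop (nhds (1 / 2 ^ 24)) := by
  have h := ((catalan_shift3.pow 4).mul (frac_tendsto.pow 2))
  have hval : ((64 : ℝ)⁻¹ ^ 4 * 1 ^ 2) = 1 / 2 ^ 24 := by norm_num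
  rw [hval] at h
  apply h.congr
  intro n
  have c3 : (catalan n : ℝ) ≠ 0 := by exact_mod_cast (catalan_pos _).ne'
  have hn1 : ((n : ℝ) + 1) ≠ 0 := by positivity
  push_cast
  field_simp
  try ring
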